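/- Let μ be a Borel probability measure on the unit sphere S^{n−1} ⊂ ℝⁿ with μ(H) = 0 for every hyperplane H ⊂ ℝⁿ through the origin. Then there exists an invertible linear map T : ℝⁿ → ℝⁿ such that the pushforward of μ under x ↦ Tx/|Tx| is isotropic, i.e., ∫ (x·θ)² d((R∘T)_*μ)(x) = 1/n for every unit vector θ. -/

import Mathlib

open MeasureTheory Matrix
open scoped RealInnerProductSpace ENNReal
set_option maxHeartbeats 1000000
set_option synthInstance.maxHeartbeats 100000

variable {n : ℕ}

local notation "E" => EuclideanSpace ℝ (Fin n)

noncomputable def matCLM (A : Matrix (Fin n) (Fin n) ℝ) : E →L[ℝ] E :=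
  Matrix.toEuclideanCLM (𝕜 := ℝ) A

lemma slab_meas (e : E) (δ : ℝ) :
    MeasurableSet {x : E | ‖x‖ = 1 ∧ |⟪x, e⟫| < δ} := by
  apply MeasurableSet.inter
  · exact measurableSet_eq_fun (continuous_norm.measurable) measurable_const
  · have : Continuous fun x : E => |⟪x, e⟫| :=
      ((continuous_id.inner continuous_const)).abs
    exact measurableSet_lt this.measurable measurable_const

lemma slab_small (hn : 1 ≤ n) (μ : Measure E) [IsProbabilityMeasure μ]
    (hhyp : ∀ θ : E, θ ≠ 0 → μ {x | ⟪x, θ⟫ = 0} = 0) (ε : ℝ≥0∞) (hε : 0 < ε) :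
    ∃ δ : ℝ, 0 < δ ∧ δ ≤ 1 ∧ ∀ e : E, ‖e‖ = 1 →
      μ {x : E | ‖x‖ = 1 ∧ |⟪x, e⟫| < δ} ≤ ε := by
  have key : ∀ e : E, ∃ d : ℝ, 0 < d ∧ d ≤ 1/2 ∧ (‖e‖ = 1 →
      μ {x : E | ‖x‖ = 1 ∧ |⟪x, e⟫| < 2*d} ≤ ε) := by
    intro e
    by_cases he : ‖e‖ = 1
    · have hene : e ≠ 0 := fun h => by simp [h] at he
      set C : ℕ → Set E := fun k => {x : E | ‖x‖ = 1 ∧ |⟪x, e⟫| < 1/(k+1)} with hC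
      have hmono : Antitone C := by
        intro a b hab x hx
        exact ⟨hx.1, lt_of_lt_of_le hx.2 (by
          apply one_div_le_one_div_of_le (by positivity)
          exact_mod_cast Nat.succ_le_succ hab)⟩
      have hint : ⋂ k, C k ⊆ {x : E | ⟪x, e⟫ = 0} := by
        intro x hx
        simp only [Set.mem_iInter, hC, Set.mem_setOf_eq] at hx
        have : |⟪x, e⟫| = 0 := by
          by_contra h
          have hpos : 0 < |⟪x, e⟫| := lt_of_le_of_ne (abs_nonneg _) (Ne.symm h)
          obtain ⟨k, hk⟩ := exists_nat_one_div_lt hpos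
          exact absurd ((hx k).2) (not_lt.2 (le_of_lt hk))
        simpa [abs_eq_zero] using this
      have hzero : μ (⋂ k, C k) = 0 :=
        measure_mono_null hint (hhyp e hene)
      have htend : Filter.Tendsto (fun k => μ (C k)) Filter.atTop (nhds 0) := by
        rw [← hzero]
        exact tendsto_measure_iInter_atTop (fun k => (slab_meas e _).nullMeasurableSet)
          hmono ⟨0, measure_ne_top μ _⟩
      obtain ⟨k, hk⟩ := (htend.eventually_lt_const hε).exists
      refine ⟨1/(2*(k+1)), by positivity, ?_, fun _ => ?_⟩
      · rw [div_le_div_iff₀ (by positivity) (by norm_num)]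
        nlinarith [Nat.cast_nonneg (α := ℝ) k]
        
      · have h2 : 2 * (1/(2*((k:ℝ)+1))) = 1/(k+1) := by
          field_simp
        rw [h2]
        exact le_of_lt hk
    · exact ⟨1/2, by norm_num, le_refl _, fun h => absurd h he⟩
  choose δf hδpos hδhalf hδprop using key
  have hKcompact : IsCompact (Metric.sphere (0:E) 1) := isCompact_sphere 0 1
  obtain ⟨t, htK, htcover⟩ := hKcompact.elim_nhds_subcover
    (fun e => Metric.ball e (δf e))
    (fun e _ => Metric.ball_mem_nhds e (hδpos e))
  have htne : t.Nonempty := by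
    have : (EuclideanSpace.single (⟨0, hn⟩ : Fin n) (1:ℝ)) ∈ Metric.sphere (0:E) 1 := by
      simp [EuclideanSpace.norm_single]
    obtain ⟨i, hi, _⟩ := Set.mem_iUnion₂.1 (htcover this)
    exact ⟨i, hi⟩
  set δ : ℝ := min 1 (t.inf' htne δf) with hδdef
  have hδpos' : 0 < δ := by
    apply lt_min one_pos
    rw [Finset.lt_inf'_iff]
    exact fun i _ => hδpos i
  refine ⟨δ, hδpos', min_le_left _ _, fun e he => ?_⟩
  have heK : e ∈ Metric.sphere (0:E) 1 := by simpa [mem_sphere_iff_norm] using he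
  obtain ⟨i, hit, hib⟩ := Set.mem_iUnion₂.1 (htcover heK)
  have hiK : ‖i‖ = 1 := by
    have := htK i hit; simpa [mem_sphere_iff_norm] using this
  have hsub : {x : E | ‖x‖ = 1 ∧ |⟪x, e⟫| < δ} ⊆ {x : E | ‖x‖ = 1 ∧ |⟪x, i⟫| < 2*(δf i)} := by
    intro x hx
    refine ⟨hx.1, ?_⟩
    have h1 : |⟪x, i⟫| ≤ |⟪x, e⟫| + |⟪x, i - e⟫| := by
      have hie : ⟪x, i⟫ = ⟪x, e⟫ + ⟪x, i - e⟫ := by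
        rw [← inner_add_right]
        congr 1
        abel
      rw [hie]; exact abs_add_le _ _
    have h2 : |⟪x, i - e⟫| ≤ ‖x‖ * ‖i - e‖ := abs_real_inner_le_norm _ _
    have h3 : ‖i - e‖ < δf i := by
      have := Metric.mem_ball.1 hib
      rwa [dist_eq_norm, ← norm_neg, neg_sub] at this
    have h4 : δ ≤ δf i := le_trans (min_le_right _ _) (Finset.inf'_le _ hit)
    calc |⟪x, i⟫| ≤ |⟪x, e⟫| + ‖x‖ * ‖i - e‖ := by linarith
      _ < δ + 1 * δf i := by rw [hx.1]; linarith [hx.2]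
      _ ≤ 2 * δf i := by linarith
  exact le_trans (measure_mono hsub) (hδprop i hiK)

lemma matCLM_norm_sq' (A : Matrix (Fin n) (Fin n) ℝ) (x : E) :
    ‖matCLM A x‖ ^ 2 = ∑ i, (Matrix.isHermitian_conjTranspose_mul_self A).eigenvalues i *
      ⟪x, (Matrix.isHermitian_conjTranspose_mul_self A).eigenvectorBasis i⟫ ^ 2 := by
  have hS := Matrix.isHermitian_conjTranspose_mul_self A
  show ‖matCLM A x‖ ^ 2 = ∑ i, hS.eigenvalues i * ⟪x, hS.eigenvectorBasis i⟫ ^ 2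
  set b := hS.eigenvectorBasis with hb
  set S := Aᴴ * A with hSdef
  set TS := matCLM S with hTS
  have hTSb : ∀ i, TS (b i) = hS.eigenvalues i • b i := by
    intro i
    apply WithLp.ofLp_injective
    rw [hTS, matCLM, Matrix.ofLp_toEuclideanCLM]
    have := hS.mulVec_eigenvectorBasis i
    simp only [WithLp.ofLp_smul]
    exact this
  have hsa : _root_.IsSelfAdjoint TS := by
    show star (matCLM S) = matCLM S
    rw [matCLM, ← StarHomClass.map_star]
    congr 1
  have key : ‖matCLM A x‖ ^ 2 = ⟪x, TS x⟫ := by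
    have h1 : TS x = ContinuousLinearMap.adjoint (matCLM A) (matCLM A x) := by
      rw [hTS, matCLM, hSdef, _root_.map_mul, ← ContinuousLinearMap.star_eq_adjoint]
      rw [show Aᴴ = star A from rfl, StarHomClass.map_star]
      rfl
    rw [h1, ContinuousLinearMap.adjoint_inner_right, real_inner_self_eq_norm_sq]
  rw [key, ← OrthonormalBasis.sum_inner_mul_inner b x (TS x)]
  congr 1
  ext i
  have h2 : ⟪b i, TS x⟫ = hS.eigenvalues i * ⟪x, b i⟫ := by
    have h3 : ⟪b i, TS x⟫ = ⟪TS (b i), x⟫ := by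
      conv_rhs => rw [← hsa.adjoint_eq]
      rw [ContinuousLinearMap.adjoint_inner_left]
    rw [h3, hTSb, inner_smul_left, real_inner_comm]
    simp
  rw [h2]; ring

lemma matCLM_eig_prod (A : Matrix (Fin n) (Fin n) ℝ) (hdet : A.det = 1) :
    ∏ i, (Matrix.isHermitian_conjTranspose_mul_self A).eigenvalues i = 1 := by
  have h := (Matrix.isHermitian_conjTranspose_mul_self A).det_eq_prod_eigenvalues
  have hd : (Aᴴ * A).det = 1 := by
    rw [Matrix.det_mul, Matrix.det_conjTranspose, hdet]
    simp
  rw [hd] at h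
  exact_mod_cast h.symm

lemma matCLM_eig_nonneg (A : Matrix (Fin n) (Fin n) ℝ) (i : Fin n) :
    0 ≤ (Matrix.isHermitian_conjTranspose_mul_self A).eigenvalues i :=
  (Matrix.posSemidef_conjTranspose_mul_self A).eigenvalues_nonneg i

lemma parseval_sq (b : OrthonormalBasis (Fin n) ℝ E) (x : E) :
    ∑ i, ⟪x, b i⟫ ^ 2 = ‖x‖ ^ 2 := by
  rw [← real_inner_self_eq_norm_sq, ← OrthonormalBasis.sum_inner_mul_inner b x x]
  congr 1; ext i; rw [real_inner_comm (b i) x]; ring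

noncomputable def matL : Matrix (Fin n) (Fin n) ℝ →ₗ[ℝ] (E →L[ℝ] E) where
  toFun := matCLM
  map_add' A B := by simp [matCLM]
  map_smul' c A := by simp [matCLM]

lemma matL_cont : Continuous (matL (n := n)) :=
  matL.continuous_of_finiteDimensional

noncomputable def ff (μ : Measure E) (A : Matrix (Fin n) (Fin n) ℝ) : ℝ :=
  ∫ x, Real.log ‖matCLM A x‖ ∂μ

lemma ae_unit (μ : Measure E) [IsProbabilityMeasure μ]
    (hsph : μ (Metric.sphere (0 : E) 1) = 1) : ∀ᵐ x ∂μ, ‖x‖ = 1 := by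
  have hms : MeasurableSet (Metric.sphere (0 : E) 1) :=
    Metric.isClosed_sphere.measurableSet
  have : μ (Metric.sphere (0 : E) 1)ᶜ = 0 := by
    rw [measure_compl hms (measure_ne_top μ _), hsph, measure_univ]
    simp
  filter_upwards [measure_eq_zero_iff_ae_notMem.1 this] with x hx
  simpa [mem_sphere_zero_iff_norm] using hx

lemma aesm_log (μ : Measure E) (A : Matrix (Fin n) (Fin n) ℝ) :
    AEStronglyMeasurable (fun x : E => Real.log ‖matCLM A x‖) μ := by
  apply Measurable.aestronglyMeasurable
  exact Real.measurable_log.comp (continuous_norm.comp (matCLM A).continuous).measurable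

lemma inv_norm_pos (hn : 1 ≤ n) (A : Matrix (Fin n) (Fin n) ℝ) (hA : IsUnit A.det) :
    0 < ‖matCLM A⁻¹‖ ∧ ∀ x : E, ‖x‖ ≤ ‖matCLM A⁻¹‖ * ‖matCLM A x‖ := by
  have hinv : ∀ x : E, matCLM A⁻¹ (matCLM A x) = x := by
    intro x
    have : matCLM (A⁻¹ * A) = matCLM 1 := by rw [Matrix.nonsing_inv_mul A hA]
    have h2 : matCLM A⁻¹ (matCLM A x) = matCLM (A⁻¹ * A) x := by
      rw [matCLM, matCLM, matCLM, _root_.map_mul]; rfl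
    rw [h2, this]
    simp [matCLM]
  have hb : ∀ x : E, ‖x‖ ≤ ‖matCLM A⁻¹‖ * ‖matCLM A x‖ := by
    intro x
    calc ‖x‖ = ‖matCLM A⁻¹ (matCLM A x)‖ := by rw [hinv]
      _ ≤ ‖matCLM A⁻¹‖ * ‖matCLM A x‖ := (matCLM A⁻¹).le_opNorm _
  refine ⟨?_, hb⟩
  set e : E := EuclideanSpace.single (⟨0, hn⟩ : Fin n) (1:ℝ) with he
  have hene : ‖e‖ = 1 := by simp [he, EuclideanSpace.norm_single]
  by_contra h
  push_neg at h
  have h0 : ‖matCLM A⁻¹‖ = 0 := le_antisymm h (norm_nonneg _)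
  have := hb e
  rw [h0, zero_mul, hene] at this
  linarith

lemma log_abs_bound {t lo hi : ℝ} (hlo : 0 < lo) (h1 : lo ≤ t) (h2 : t ≤ hi) :
    |Real.log t| ≤ max |Real.log lo| |Real.log hi| := by
  rcases le_or_gt 0 (Real.log t) with h | h
  · rw [abs_of_nonneg h]
    exact le_max_of_le_right (le_trans (Real.log_le_log (lt_of_lt_of_le hlo h1) h2)
      (le_abs_self _))
  · rw [abs_of_neg h]
    apply le_max_of_le_left
    have hlt : Real.log lo ≤ Real.log t := Real.log_le_log hlo h1
    exact le_trans (by linarith) (neg_le_abs (Real.log lo))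

lemma ff_continuousAt (hn : 1 ≤ n) (μ : Measure E) [IsProbabilityMeasure μ]
    (hsph : μ (Metric.sphere (0 : E) 1) = 1)
    (A₀ : Matrix (Fin n) (Fin n) ℝ) (hA₀ : IsUnit A₀.det) :
    ContinuousAt (ff μ) A₀ := by
  obtain ⟨hc₀, hlow⟩ := inv_norm_pos hn A₀ hA₀
  set c₀ : ℝ := ‖matCLM A₀⁻¹‖
  set r : ℝ := (2 * c₀)⁻¹ with hr
  have hrpos : 0 < r := by positivity
  set lo : ℝ := c₀⁻¹ - r with hlo
  have hlopos : 0 < lo := by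
    rw [hlo, hr]
    have : (2 * c₀)⁻¹ < c₀⁻¹ := by
      apply inv_strictAnti₀ hc₀
      linarith
    linarith
  set hi : ℝ := ‖matCLM A₀‖ + r with hhi
  set B : ℝ := max |Real.log lo| |Real.log hi| with hB
  have hV : ∀ᶠ A in nhds A₀, ‖matL A - matL A₀‖ < r := by
    have hca : Filter.Tendsto matL (nhds A₀) (nhds (matL A₀)) :=
      matL_cont.continuousAt (x := A₀)
    have h2 := Metric.tendsto_nhds.mp hca r hrpos
    filter_upwards [h2] with A hA
    rwa [dist_eq_norm] at hA
  have hbounds : ∀ A, ‖matL A - matL A₀‖ < r → ∀ x : E, ‖x‖ = 1 →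
      lo ≤ ‖matCLM A x‖ ∧ ‖matCLM A x‖ ≤ hi := by
    intro A hA x hx
    have h1 : ‖matCLM A x - matCLM A₀ x‖ ≤ r := by
      have heq : matCLM A x - matCLM A₀ x = (matL A - matL A₀) x := by
        simp [matL]; rfl
      rw [heq]
      calc ‖(matL A - matL A₀) x‖ ≤ ‖matL A - matL A₀‖ * ‖x‖ :=
            (matL A - matL A₀).le_opNorm x
        _ ≤ r := by rw [hx, mul_one]; exact le_of_lt hA
    have h2 : c₀⁻¹ ≤ ‖matCLM A₀ x‖ := by
      have h5 := hlow x
      rw [hx] at h5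
      rw [inv_eq_one_div, div_le_iff₀ hc₀]
      nlinarith
    constructor
    · have h5 := norm_sub_norm_le (matCLM A₀ x) (matCLM A x)
      rw [norm_sub_rev] at h5
      rw [hlo]
      linarith
    · have h4 : ‖matCLM A₀ x‖ ≤ ‖matCLM A₀‖ := by
        calc ‖matCLM A₀ x‖ ≤ ‖matCLM A₀‖ * ‖x‖ := (matCLM A₀).le_opNorm x
          _ = ‖matCLM A₀‖ := by rw [hx, mul_one]
      have := norm_sub_norm_le (matCLM A x) (matCLM A₀ x)
      rw [hhi]
      linarith
  haveI : FirstCountableTopology (Matrix (Fin n) (Fin n) ℝ) :=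
    inferInstanceAs (FirstCountableTopology (Fin n → Fin n → ℝ))
  apply continuousAt_of_dominated (bound := fun _ => B)
  · exact Filter.Eventually.of_forall (fun A => aesm_log μ A)
  · filter_upwards [hV] with A hA
    filter_upwards [ae_unit μ hsph] with x hx
    have := hbounds A hA x hx
    rw [Real.norm_eq_abs]
    exact log_abs_bound hlopos this.1 this.2
  · exact integrable_const B
  · filter_upwards [ae_unit μ hsph] with x hx
    have hpos : ‖matCLM A₀ x‖ ≠ 0 := by
      have := hlow x
      rw [hx] at this
      intro h
      rw [h, mul_zero] at this
      linarith
    have hc : Continuous fun A' : Matrix (Fin n) (Fin n) ℝ => ‖matCLM A' x‖ :=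
      continuous_norm.comp
        ((ContinuousLinearMap.apply ℝ (EuclideanSpace ℝ (Fin n)) x).continuous.comp matL_cont)
    exact ContinuousAt.comp (g := Real.log) (f := fun A' => ‖matCLM A' x‖) (x := A₀)
      (Real.continuousAt_log hpos) hc.continuousAt

lemma ff_integrable (hn : 1 ≤ n) (μ : Measure E) [IsProbabilityMeasure μ]
    (hsph : μ (Metric.sphere (0 : E) 1) = 1)
    (A : Matrix (Fin n) (Fin n) ℝ) (hA : IsUnit A.det) :
    Integrable (fun x : E => Real.log ‖matCLM A x‖) μ := by
  obtain ⟨hc, hlow⟩ := inv_norm_pos hn A hA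
  set lo : ℝ := ‖matCLM A⁻¹‖⁻¹ with hlodef
  have hlopos : 0 < lo := by positivity
  set hi : ℝ := ‖matCLM A‖
  apply Integrable.mono' (integrable_const (max |Real.log lo| |Real.log hi|)) (aesm_log μ A)
  filter_upwards [ae_unit μ hsph] with x hx
  rw [Real.norm_eq_abs]
  apply log_abs_bound hlopos
  · rw [hlodef, inv_eq_one_div, div_le_iff₀ hc]
    have := hlow x
    rw [hx] at this
    nlinarith
  · calc ‖matCLM A x‖ ≤ ‖matCLM A‖ * ‖x‖ := (matCLM A).le_opNorm x
      _ = hi := by rw [hx, mul_one]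

lemma coord_le_norm (y : E) (i : Fin n) : |y i| ≤ ‖y‖ := by
  have h1 : ⟪y, EuclideanSpace.single i (1:ℝ)⟫ = y i := by
    rw [EuclideanSpace.inner_single_right]
    simp
  calc |y i| = |⟪y, EuclideanSpace.single i (1:ℝ)⟫| := by rw [h1]
    _ ≤ ‖y‖ * ‖EuclideanSpace.single i (1:ℝ)‖ := abs_real_inner_le_norm _ _
    _ = ‖y‖ := by rw [EuclideanSpace.norm_single]; simp

lemma entry_le_opNorm (A : Matrix (Fin n) (Fin n) ℝ) (i j : Fin n) :
    |A i j| ≤ ‖matCLM A‖ := by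
  have h4 : (matCLM A (EuclideanSpace.single j (1:ℝ))) i = A i j := by
    show (A *ᵥ Pi.single j 1) i = A i j
    rw [Matrix.mulVec_single]
    simp
  have h3 := coord_le_norm (matCLM A (EuclideanSpace.single j (1:ℝ))) i
  rw [h4] at h3
  calc |A i j| ≤ ‖matCLM A (EuclideanSpace.single j (1:ℝ))‖ := h3
    _ ≤ ‖matCLM A‖ * ‖EuclideanSpace.single j (1:ℝ)‖ := (matCLM A).le_opNorm _
    _ = ‖matCLM A‖ := by rw [EuclideanSpace.norm_single]; simp

lemma ff_coercive (hn : 1 ≤ n) (μ : Measure E) [IsProbabilityMeasure μ]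
    (hsph : μ (Metric.sphere (0 : E) 1) = 1)
    {δ : ℝ} (hδ0 : 0 < δ) (hδ1 : δ ≤ 1)
    (hslab : ∀ e : E, ‖e‖ = 1 →
      μ {x : E | ‖x‖ = 1 ∧ |⟪x, e⟫| < δ} ≤ ENNReal.ofReal (1/(2*n)))
    (A : Matrix (Fin n) (Fin n) ℝ) (hdet : A.det = 1) :
    Real.log δ + Real.log ‖matCLM A‖ / 2 ≤ ff μ A := by
  set ev := (Matrix.isHermitian_conjTranspose_mul_self A).eigenvalues with hev
  set b := (Matrix.isHermitian_conjTranspose_mul_self A).eigenvectorBasis with hb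
  have hprod : ∏ i, ev i = 1 := matCLM_eig_prod A hdet
  have hnonneg : ∀ i, 0 ≤ ev i := matCLM_eig_nonneg A
  have hpos : ∀ i, 0 < ev i := by
    intro i
    rcases lt_or_eq_of_le (hnonneg i) with h | h
    · exact h
    · exfalso
      have : ∏ j, ev j = 0 := Finset.prod_eq_zero (Finset.mem_univ i) h.symm
      rw [hprod] at this; norm_num at this
  obtain ⟨i₀, -, hmax⟩ := Finset.exists_max_image Finset.univ ev
    ⟨⟨0, by omega⟩, Finset.mem_univ _⟩
  set M := ev i₀ with hM
  have hMpos : 0 < M := hpos i₀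
  have hM1 : 1 ≤ M := by
    have h1 : (1:ℝ) ≤ M ^ n := by
      rw [← hprod]
      calc ∏ i, ev i ≤ ∏ _i : Fin n, M :=
            Finset.prod_le_prod (fun i _ => hnonneg i) (fun i _ => hmax i (Finset.mem_univ i))
        _ = M ^ n := by rw [Finset.prod_const, Finset.card_univ, Fintype.card_fin]
    exact (one_le_pow_iff_of_nonneg (hnonneg i₀) (by omega)).mp h1
  set L : ℝ := Real.log M / 2 with hL
  have hL0 : 0 ≤ L := by
    have := Real.log_nonneg hM1
    rw [hL]; linarith
  set l : ℝ := (1 - (n:ℝ)) * L with hl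
  have hn1 : (1:ℝ) ≤ (n:ℝ) := by exact_mod_cast hn
  have hl0 : l ≤ 0 := mul_nonpos_of_nonpos_of_nonneg (by linarith) hL0
  have hmin : ∀ j, M⁻¹ ^ (n-1) ≤ ev j := by
    intro j
    have h2 : ∏ i ∈ Finset.univ.erase j, ev i ≤ M ^ (n-1) := by
      calc ∏ i ∈ Finset.univ.erase j, ev i ≤ ∏ _i ∈ Finset.univ.erase j, M :=
            Finset.prod_le_prod (fun i _ => hnonneg i) (fun i _ => hmax i (Finset.mem_univ i))
        _ = M ^ (n-1) := by
            rw [Finset.prod_const, Finset.card_erase_of_mem (Finset.mem_univ j),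
              Finset.card_univ, Fintype.card_fin]
    have h3 : ev j * ∏ i ∈ Finset.univ.erase j, ev i = 1 := by
      rw [Finset.mul_prod_erase _ _ (Finset.mem_univ j), hprod]
    have h4 : (1:ℝ) ≤ ev j * M ^ (n-1) := by
      calc (1:ℝ) = ev j * ∏ i ∈ Finset.univ.erase j, ev i := h3.symm
        _ ≤ ev j * M ^ (n-1) := mul_le_mul_of_nonneg_left h2 (hnonneg j)
    rw [inv_pow, inv_eq_one_div, div_le_iff₀ (pow_pos hMpos _)]
    linarith
  set G : Set E := {x : E | ‖x‖ = 1 ∧ δ ≤ |⟪x, b i₀⟫|} with hG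
  have hGmeas : MeasurableSet G := by
    apply MeasurableSet.inter
    · exact measurableSet_eq_fun (continuous_norm.measurable) measurable_const
    · have hcont : Continuous fun x : E => |⟪x, b i₀⟫| :=
        ((continuous_id.inner continuous_const)).abs
      exact measurableSet_le measurable_const hcont.measurable
  set c : ℝ := (n:ℝ) * L with hc
  have hc0 : 0 ≤ c := mul_nonneg (by linarith) hL0
  have hpoint : ∀ x : E, ‖x‖ = 1 →
      Real.log δ + (G.indicator (fun _ => c) x + l) ≤ Real.log ‖matCLM A x‖ := by
    intro x hx
    have hns := matCLM_norm_sq' A x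
    have hcast : ((n-1 : ℕ):ℝ) = (n:ℝ) - 1 := by
      rw [Nat.cast_sub hn]; simp
    by_cases hxG : x ∈ G
    · rw [Set.indicator_of_mem hxG]
      have hsq : δ^2 ≤ ⟪x, b i₀⟫^2 := by
        rw [← sq_abs ⟪x, b i₀⟫]
        exact pow_le_pow_left₀ (le_of_lt hδ0) hxG.2 2
      have h1 : M * δ^2 ≤ ‖matCLM A x‖^2 := by
        rw [hns]
        calc M * δ^2 ≤ ev i₀ * ⟪x, b i₀⟫^2 := by nlinarith
          _ ≤ ∑ i, ev i * ⟪x, b i⟫^2 :=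
            Finset.single_le_sum (f := fun i => ev i * ⟪x, b i⟫^2)
              (fun i _ => mul_nonneg (hnonneg i) (sq_nonneg _)) (Finset.mem_univ i₀)
      have hTx : 0 < ‖matCLM A x‖ := by
        have h0 : 0 < M * δ^2 := by positivity
        nlinarith [norm_nonneg (matCLM A x)]
      have h2 : Real.log (M * δ^2) ≤ Real.log (‖matCLM A x‖^2) :=
        Real.log_le_log (by positivity) h1
      rw [Real.log_mul (ne_of_gt hMpos) (by positivity), Real.log_pow, Real.log_pow] at h2
      have h3 : c + l = L := by rw [hc, hl]; ring
      rw [h3, hL]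
      push_cast at h2
      linarith
    · rw [Set.indicator_of_notMem hxG]
      have h1 : M⁻¹ ^ (n-1) ≤ ‖matCLM A x‖^2 := by
        rw [hns]
        have hpar : ∑ i, ⟪x, b i⟫^2 = 1 := by rw [parseval_sq b x, hx]; norm_num
        calc M⁻¹ ^ (n-1) = M⁻¹ ^ (n-1) * ∑ i, ⟪x, b i⟫^2 := by rw [hpar, mul_one]
          _ = ∑ i, M⁻¹ ^ (n-1) * ⟪x, b i⟫^2 := Finset.mul_sum _ _ _
          _ ≤ ∑ i, ev i * ⟪x, b i⟫^2 :=
            Finset.sum_le_sum (fun i _ => mul_le_mul_of_nonneg_right (hmin i) (sq_nonneg _))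
      have hinvpos : (0:ℝ) < M⁻¹ ^ (n-1) := by positivity
      have hTx : 0 < ‖matCLM A x‖ := by
        nlinarith [norm_nonneg (matCLM A x)]
      have h2 : Real.log (M⁻¹ ^ (n-1)) ≤ Real.log (‖matCLM A x‖^2) :=
        Real.log_le_log hinvpos h1
      rw [Real.log_pow, Real.log_pow, Real.log_inv] at h2
      have hlogδ : Real.log δ ≤ 0 := Real.log_nonpos (le_of_lt hδ0) hδ1
      rw [hl, hL]
      rw [hcast] at h2
      push_cast at h2
      nlinarith [Real.log_nonneg hM1]
  -- integrate
  have hAunit : IsUnit A.det := by rw [hdet]; exact isUnit_one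
  have hf_int : Integrable (fun x : E => Real.log ‖matCLM A x‖) μ :=
    ff_integrable hn μ hsph A hAunit
  have hg_int : Integrable
      (fun x : E => Real.log δ + (G.indicator (fun _ => c) x + l)) μ := by
    apply (integrable_const (Real.log δ)).add
    exact ((integrable_const c).indicator hGmeas).add (integrable_const l)
  have hle : ∫ x, (Real.log δ + (G.indicator (fun _ => c) x + l)) ∂μ ≤ ff μ A := by
    apply integral_mono_ae hg_int hf_int
    filter_upwards [ae_unit μ hsph] with x hx
    exact hpoint x hx
  have hgval : ∫ x, (Real.log δ + (G.indicator (fun _ => c) x + l)) ∂μ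
      = Real.log δ + ((μ G).toReal * c + l) := by
    have h1 : Integrable (fun x : E => G.indicator (fun _ => c) x + l) μ :=
      ((integrable_const c).indicator hGmeas).add (integrable_const l)
    have h2 : Integrable (fun x : E => G.indicator (fun _ => c) x) μ :=
      (integrable_const c).indicator hGmeas
    rw [integral_add (integrable_const _) h1, integral_add h2 (integrable_const l),
      integral_const, integral_const, integral_indicator_const _ hGmeas]
    simp [measure_univ, smul_eq_mul, Measure.real]
  -- measure of G
  have hbunit : ‖b i₀‖ = 1 := b.orthonormal.1 i₀
  have hGc : μ {x : E | ‖x‖ = 1 ∧ |⟪x, b i₀⟫| < δ} ≤ ENNReal.ofReal (1/(2*n)) :=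
    hslab (b i₀) hbunit
  have hSp : μ {x : E | ‖x‖ = 1} = 1 := by
    rw [← hsph]
    congr 1
    ext x
    simp [mem_sphere_zero_iff_norm]
  have hcover : {x : E | ‖x‖ = 1} ⊆ G ∪ {x : E | ‖x‖ = 1 ∧ |⟪x, b i₀⟫| < δ} := by
    intro x hx
    rcases le_or_gt δ |⟪x, b i₀⟫| with h | h
    · exact Or.inl ⟨hx, h⟩
    · exact Or.inr ⟨hx, h⟩
  have hμG : 1 - 1/(2*(n:ℝ)) ≤ (μ G).toReal := by
    have h1 : (1:ℝ≥0∞) ≤ μ G + ENNReal.ofReal (1/(2*n)) := by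
      calc (1:ℝ≥0∞) = μ {x : E | ‖x‖ = 1} := hSp.symm
        _ ≤ μ (G ∪ {x : E | ‖x‖ = 1 ∧ |⟪x, b i₀⟫| < δ}) := measure_mono hcover
        _ ≤ μ G + μ {x : E | ‖x‖ = 1 ∧ |⟪x, b i₀⟫| < δ} := measure_union_le _ _
        _ ≤ μ G + ENNReal.ofReal (1/(2*n)) := add_le_add (le_refl _) hGc
    have h2 := ENNReal.toReal_mono (by finiteness) h1
    rw [ENNReal.toReal_add (measure_ne_top μ G) ENNReal.ofReal_ne_top, ENNReal.toReal_one,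
      ENNReal.toReal_ofReal (by positivity)] at h2
    linarith
  -- final chain
  have hfinal : Real.log δ + L/2 ≤ ff μ A := by
    have hexp : (1 - 1/(2*(n:ℝ)))*((n:ℝ)*L) = (n:ℝ)*L - L/2 := by
      have hne : (n:ℝ) ≠ 0 := by positivity
      field_simp
    have h5 : (1 - 1/(2*(n:ℝ)))*((n:ℝ)*L) ≤ (μ G).toReal * c := by
      rw [hc]
      exact mul_le_mul_of_nonneg_right hμG (mul_nonneg (by linarith) hL0)
    rw [hgval] at hle
    rw [hexp] at h5
    rw [hl] at hle
    nlinarith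
  -- opnorm ≤ sqrt M
  have hTle : ‖matCLM A‖ ≤ Real.sqrt M := by
    apply ContinuousLinearMap.opNorm_le_bound _ (Real.sqrt_nonneg M)
    intro x
    have h1 : ‖matCLM A x‖^2 ≤ M * ‖x‖^2 := by
      rw [matCLM_norm_sq' A x, ← parseval_sq b x, Finset.mul_sum]
      exact Finset.sum_le_sum (fun i _ =>
        mul_le_mul_of_nonneg_right (hmax i (Finset.mem_univ i)) (sq_nonneg _))
    calc ‖matCLM A x‖ = Real.sqrt (‖matCLM A x‖^2) := (Real.sqrt_sq (norm_nonneg _)).symm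
      _ ≤ Real.sqrt (M * ‖x‖^2) := Real.sqrt_le_sqrt h1
      _ = Real.sqrt M * ‖x‖ := by
          rw [Real.sqrt_mul (le_of_lt hMpos), Real.sqrt_sq (norm_nonneg _)]
  have hlogT : Real.log ‖matCLM A‖ ≤ L := by
    rcases eq_or_lt_of_le (norm_nonneg (matCLM A)) with h | h
    · rw [← h, Real.log_zero]; exact hL0
    · calc Real.log ‖matCLM A‖ ≤ Real.log (Real.sqrt M) := Real.log_le_log h hTle
        _ = Real.log M / 2 := Real.log_sqrt (le_of_lt hMpos)
  linarith



noncomputable def Pmat (θ : E) : Matrix (Fin n) (Fin n) ℝ :=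
  Matrix.replicateCol Unit (fun i => θ i) * Matrix.replicateRow Unit (fun i => θ i)

noncomputable def Bmat (θ : E) (t : ℝ) : Matrix (Fin n) (Fin n) ℝ :=
  1 + t • Pmat θ

lemma dot_self_eq (θ : E) : dotProduct (fun i => θ i) (fun i => θ i) = ‖θ‖^2 := by
  rw [← real_inner_self_eq_norm_sq]
  simp [dotProduct, PiLp.inner_apply, RCLike.inner_apply, conj_trivial]
  rw [EuclideanSpace.norm_sq_eq]
  exact Finset.sum_congr rfl fun i _ => by rw [Real.norm_eq_abs, sq_abs, sq]

lemma Bmat_det (θ : E) (hθ : ‖θ‖ = 1) (t : ℝ) : (Bmat θ t).det = 1 + t := by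
  rw [Bmat]
  have h1 : t • Pmat θ = Matrix.replicateCol Unit (t • fun i => θ i) * Matrix.replicateRow Unit (fun i => θ i) := by
    rw [Pmat, ← Matrix.smul_mul]
    congr 1
  rw [h1, Matrix.det_one_add_replicateCol_mul_replicateRow]
  rw [dotProduct_smul]
  rw [dot_self_eq θ, hθ]
  norm_num

lemma Pmat_apply (θ : E) (v : E) : matCLM (Pmat θ) v = ⟪v, θ⟫ • θ := by
  apply WithLp.ofLp_injective
  rw [matCLM, Matrix.ofLp_toEuclideanCLM]
  funext i
  show (Pmat θ *ᵥ fun j => v j) i = ((⟪v, θ⟫ • θ) : E) i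
  have hP : ∀ i j, Pmat θ i j = θ i * θ j := by
    intro i j
    simp [Pmat, Matrix.mul_apply, Matrix.replicateCol_apply, Matrix.replicateRow_apply]
  have hinner : ⟪v, θ⟫ = ∑ j, v j * θ j := by
    simp [PiLp.inner_apply, RCLike.inner_apply, conj_trivial]
    exact Finset.sum_congr rfl fun j _ => mul_comm _ _
  simp only [Matrix.mulVec, dotProduct, hP, PiLp.smul_apply, smul_eq_mul, hinner]
  rw [Finset.sum_mul]
  apply Finset.sum_congr rfl
  intro j _
  ring
lemma Bmat_apply (θ : E) (t : ℝ) (v : E) :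
    matCLM (Bmat θ t) v = v + (t * ⟪v, θ⟫) • θ := by
  rw [Bmat, matCLM, map_add]
  have h2 : Matrix.toEuclideanCLM (𝕜 := ℝ) (t • Pmat θ) = t • matCLM (Pmat θ) := by
    rw [matCLM, _root_.map_smul]
  rw [h2]
  simp only [ContinuousLinearMap.add_apply, ContinuousLinearMap.smul_apply, _root_.map_one]
  rw [Pmat_apply]
  rw [smul_smul]
  rfl


lemma exists_global_min (hn : 1 ≤ n) (μ : Measure E) [IsProbabilityMeasure μ]
    (hsph : μ (Metric.sphere (0 : E) 1) = 1)
    (hhyp : ∀ θ : E, θ ≠ 0 → μ {x | ⟪x, θ⟫ = 0} = 0) :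
    ∃ A₀ : Matrix (Fin n) (Fin n) ℝ, A₀.det = 1 ∧
      ∀ A : Matrix (Fin n) (Fin n) ℝ, A.det = 1 → ff μ A₀ ≤ ff μ A := by
  obtain ⟨δ, hδ0, hδ1, hslab⟩ := slab_small hn μ hhyp (ENNReal.ofReal (1/(2*n)))
    (by
      rw [ENNReal.ofReal_pos]
      have : (0:ℝ) < (n:ℝ) := by exact_mod_cast hn
      positivity)
  set R : ℝ := max 1 (Real.exp (2*(ff μ 1 - Real.log δ) + 2)) with hR
  have hR1 : (1:ℝ) ≤ R := le_max_left _ _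
  set K : Set (Matrix (Fin n) (Fin n) ℝ) := {A | A.det = 1 ∧ ‖matCLM A‖ ≤ R} with hK
  have h1K : (1 : Matrix (Fin n) (Fin n) ℝ) ∈ K := by
    constructor
    · exact Matrix.det_one
    · have h1 : matCLM (1 : Matrix (Fin n) (Fin n) ℝ) = 1 := by
        rw [matCLM, _root_.map_one]
      rw [h1]
      exact le_trans ContinuousLinearMap.norm_id_le hR1
  have hKclosed : IsClosed K := by
    apply IsClosed.inter
    · exact isClosed_singleton.preimage (Continuous.matrix_det continuous_id)
    · exact (isClosed_Iic).preimage (matL_cont.norm)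
  have hKcompact : IsCompact K := by
    apply IsCompact.of_isClosed_subset ?_ hKclosed
      (?_ : K ⊆ Set.univ.pi fun _ : Fin n => Set.univ.pi fun _ : Fin n => Set.Icc (-R) R)
    · exact isCompact_univ_pi fun _ => isCompact_univ_pi fun _ => isCompact_Icc
    · intro A hA
      intro i _
      intro j _
      have := entry_le_opNorm A i j
      have h2 := hA.2
      rw [Set.mem_Icc]
      constructor
      · have := abs_le.1 (le_trans this h2) ; exact this.1
      · exact le_trans (le_abs_self _) (le_trans this h2)
  have hcontOn : ContinuousOn (ff μ) K := by
    intro A hA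
    have : IsUnit A.det := by rw [hA.1]; exact isUnit_one
    exact (ff_continuousAt hn μ hsph A this).continuousWithinAt
  obtain ⟨A₀, hA₀K, hA₀min⟩ := hKcompact.exists_isMinOn ⟨1, h1K⟩ hcontOn
  refine ⟨A₀, hA₀K.1, fun A hA => ?_⟩
  rcases le_or_gt ‖matCLM A‖ R with h | h
  · exact hA₀min ⟨hA, h⟩
  · have hcoer := ff_coercive hn μ hsph hδ0 hδ1 hslab A hA
    have hlogR : 2*(ff μ 1 - Real.log δ) + 2 ≤ Real.log R := by
      rw [hR]
      calc 2*(ff μ 1 - Real.log δ) + 2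
          = Real.log (Real.exp (2*(ff μ 1 - Real.log δ) + 2)) := (Real.log_exp _).symm
        _ ≤ Real.log (max 1 (Real.exp (2*(ff μ 1 - Real.log δ) + 2))) :=
            Real.log_le_log (Real.exp_pos _) (le_max_right _ _)
    have hlogA : Real.log R < Real.log ‖matCLM A‖ :=
      Real.log_lt_log (by linarith) h
    have hmem := hA₀min h1K
    calc ff μ A₀ ≤ ff μ 1 := hmem
      _ ≤ Real.log δ + Real.log ‖matCLM A‖ / 2 := by linarith
      _ ≤ ff μ A := hcoer

lemma matCLM_ne_zero (hn : 1 ≤ n) (A : Matrix (Fin n) (Fin n) ℝ) (hA : IsUnit A.det)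
    (x : E) (hx : ‖x‖ = 1) : ‖matCLM A x‖ ≠ 0 := by
  obtain ⟨hc, hlow⟩ := inv_norm_pos hn A hA
  intro h
  have := hlow x
  rw [hx, h, mul_zero] at this
  linarith

lemma ff_smul (hn : 1 ≤ n) (μ : Measure E) [IsProbabilityMeasure μ]
    (hsph : μ (Metric.sphere (0 : E) 1) = 1)
    (A : Matrix (Fin n) (Fin n) ℝ) (hA : IsUnit A.det) {c : ℝ} (hc : 0 < c) :
    ff μ (c • A) = Real.log c + ff μ A := by
  have h1 : ∀ᵐ x ∂μ, Real.log ‖matCLM (c • A) x‖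
      = Real.log c + Real.log ‖matCLM A x‖ := by
    filter_upwards [ae_unit μ hsph] with x hx
    have h2 : matCLM (c • A) x = c • matCLM A x := by
      rw [matCLM, _root_.map_smul]; rfl
    rw [h2, norm_smul, Real.norm_eq_abs, abs_of_pos hc,
      Real.log_mul (ne_of_gt hc) (matCLM_ne_zero hn A hA x hx)]
  rw [ff, integral_congr_ae h1, integral_add (integrable_const _)
    (ff_integrable hn μ hsph A hA), integral_const]
  simp [measure_univ]
  rfl

lemma phi_lower (hn : 1 ≤ n) (μ : Measure E) [IsProbabilityMeasure μ]
    (hsph : μ (Metric.sphere (0 : E) 1) = 1)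
    (A₀ : Matrix (Fin n) (Fin n) ℝ) (hdet0 : A₀.det = 1)
    (hmin : ∀ A : Matrix (Fin n) (Fin n) ℝ, A.det = 1 → ff μ A₀ ≤ ff μ A)
    (θ : E) (hθ : ‖θ‖ = 1) {t : ℝ} (ht : t ∈ Set.Ioo (-(1:ℝ)/2) (1/2)) :
    ff μ A₀ ≤ ff μ (Bmat θ t * A₀) - (1/(n:ℝ)) * Real.log (1+t) := by
  have hnR : (0:ℝ) < (n:ℝ) := by exact_mod_cast hn
  have ht1 : (0:ℝ) < 1 + t := by
    rcases ht with ⟨h1, h2⟩; linarith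
  have hdetB : (Bmat θ t * A₀).det = 1 + t := by
    rw [Matrix.det_mul, Bmat_det θ hθ, hdet0, mul_one]
  have hBunit : IsUnit (Bmat θ t * A₀).det := by
    rw [hdetB]; exact isUnit_iff_ne_zero.2 (ne_of_gt ht1)
  set c : ℝ := (1+t) ^ (-(1/(n:ℝ))) with hcdef
  have hcpos : 0 < c := Real.rpow_pos_of_pos ht1 _
  have hcn : c ^ n = (1+t)⁻¹ := by
    rw [hcdef, ← Real.rpow_natCast ((1+t) ^ (-(1/(n:ℝ)))) n, ← Real.rpow_mul (le_of_lt ht1)]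
    have : (-(1/(n:ℝ))) * (n:ℝ) = -1 := by field_simp
    rw [this, Real.rpow_neg_one]
  have hdetc : (c • (Bmat θ t * A₀)).det = 1 := by
    rw [Matrix.det_smul, hdetB, Fintype.card_fin, hcn]
    field_simp
  have hlogc : Real.log c = -(1/(n:ℝ)) * Real.log (1+t) := by
    rw [hcdef, Real.log_rpow ht1]
  have h1 := hmin _ hdetc
  rw [ff_smul hn μ hsph _ hBunit hcpos, hlogc] at h1
  linarith

lemma first_order (hn : 1 ≤ n) (μ : Measure E) [IsProbabilityMeasure μ]
    (hsph : μ (Metric.sphere (0 : E) 1) = 1)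
    (A₀ : Matrix (Fin n) (Fin n) ℝ) (hdet0 : A₀.det = 1)
    (hmin : ∀ A : Matrix (Fin n) (Fin n) ℝ, A.det = 1 → ff μ A₀ ≤ ff μ A)
    (θ : E) (hθ : ‖θ‖ = 1) :
    ∫ x, ⟪matCLM A₀ x, θ⟫^2 / ‖matCLM A₀ x‖^2 ∂μ = 1/(n:ℝ) := by
  have hnR : (0:ℝ) < (n:ℝ) := by exact_mod_cast hn
  have hA₀unit : IsUnit A₀.det := by rw [hdet0]; exact isUnit_one
  set y : E → E := fun x => matCLM A₀ x with hy
  set w : E → E := fun x => ⟪y x, θ⟫ • θ with hw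
  set F : ℝ → E → ℝ := fun t x => Real.log ‖matCLM (Bmat θ t * A₀) x‖ with hF
  set F' : ℝ → E → ℝ := fun t x => ⟪y x + t • w x, w x⟫ / ‖y x + t • w x‖^2 with hF'
  have hB0 : Bmat θ 0 * A₀ = A₀ := by
    rw [Bmat]; simp
  -- key rewriting of F
  have hFt : ∀ t x, matCLM (Bmat θ t * A₀) x = y x + t • w x := by
    intro t x
    have h1 : matCLM (Bmat θ t * A₀) x = matCLM (Bmat θ t) (y x) := by
      rw [matCLM, _root_.map_mul]; rfl
    rw [h1, Bmat_apply, hw, smul_smul]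
  -- a.e. facts
  have hae : ∀ᵐ x ∂μ, ‖x‖ = 1 := ae_unit μ hsph
  have hwy : ∀ x, ‖w x‖ ≤ ‖y x‖ := by
    intro x
    rw [hw, norm_smul, Real.norm_eq_abs, hθ, mul_one]
    calc |⟪y x, θ⟫| ≤ ‖y x‖ * ‖θ‖ := abs_real_inner_le_norm _ _
      _ = ‖y x‖ := by rw [hθ, mul_one]
  have hclow : ∀ x : E, ‖x‖ = 1 → ∀ t : ℝ, |t| ≤ 1/2 → ‖y x‖/2 ≤ ‖y x + t • w x‖ := by
    intro x hx t ht
    have hys : ‖t • w x‖ ≤ ‖y x‖/2 := by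
      rw [norm_smul, Real.norm_eq_abs]
      calc |t| * ‖w x‖ ≤ (1/2) * ‖y x‖ :=
        mul_le_mul ht (hwy x) (norm_nonneg _) (by norm_num)
        _ = ‖y x‖/2 := by ring
    calc ‖y x‖/2 = ‖y x‖ - ‖y x‖/2 := by ring
      _ ≤ ‖y x‖ - ‖t • w x‖ := by linarith
      _ ≤ ‖y x + t • w x‖ := by
          have h6 : ‖y x‖ ≤ ‖y x + t • w x‖ + ‖t • w x‖ := by
            calc ‖y x‖ = ‖(y x + t • w x) - t • w x‖ := by rw [add_sub_cancel_right]
              _ ≤ ‖y x + t • w x‖ + ‖t • w x‖ := norm_sub_le _ _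
          linarith
  have hypos : ∀ x : E, ‖x‖ = 1 → 0 < ‖y x‖ := by
    intro x hx
    rcases eq_or_lt_of_le (norm_nonneg (y x)) with h | h
    · exact absurd h.symm (matCLM_ne_zero hn A₀ hA₀unit x hx)
    · exact h
  -- differentiability a.e.
  have h_diff : ∀ᵐ x ∂μ, ∀ t ∈ Metric.ball (0:ℝ) (1/2), HasDerivAt (F · x) (F' t x) t := by
    filter_upwards [hae] with x hx
    intro t ht
    rw [Metric.mem_ball, Real.dist_eq, sub_zero] at ht
    have hcne : ‖y x + t • w x‖ ≠ 0 :=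
      ne_of_gt (lt_of_lt_of_le (by linarith [hypos x hx] : (0:ℝ) < ‖y x‖/2)
        (hclow x hx t (le_of_lt ht)))
    have hFeq : (fun s => F s x) = fun s => Real.log ⟪y x + s • w x, y x + s • w x⟫ / 2 := by
      funext s
      rw [hF]
      show Real.log ‖matCLM (Bmat θ s * A₀) x‖ = _
      rw [hFt s x, real_inner_self_eq_norm_sq, Real.log_pow]
      push_cast
      ring
    rw [hFeq]
    have hc : HasDerivAt (fun s : ℝ => y x + s • w x) (w x) t := by
      have h2 := ((hasDerivAt_id t).smul_const (w x)).const_add (y x)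
      simpa using h2
    have hinner : HasDerivAt (fun s : ℝ => ⟪y x + s • w x, y x + s • w x⟫)
        (⟪y x + t • w x, w x⟫ + ⟪w x, y x + t • w x⟫) t := hc.inner ℝ hc
    have hinnerne : ⟪y x + t • w x, y x + t • w x⟫ ≠ 0 := by
      rw [real_inner_self_eq_norm_sq]
      positivity
    have hlog := (hinner.log hinnerne).div_const 2
    have harith : ∀ a b : ℝ, a / b = (a + a) / b / 2 := fun a b => by ring
    have hval2 : F' t x = (⟪y x + t • w x, w x⟫ + ⟪w x, y x + t • w x⟫)
        / ⟪y x + t • w x, y x + t • w x⟫ / 2 := by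
      simp only [hF']
      rw [real_inner_comm (w x) (y x + t • w x), real_inner_self_eq_norm_sq]
      exact harith _ _
    rw [hval2]
    exact hlog
  -- bound
  have h_bound : ∀ᵐ x ∂μ, ∀ t ∈ Metric.ball (0:ℝ) (1/2), ‖F' t x‖ ≤ 2 := by
    filter_upwards [hae] with x hx
    intro t ht
    rw [Metric.mem_ball, Real.dist_eq, sub_zero] at ht
    have hyp := hypos x hx
    have hcl := hclow x hx t (le_of_lt ht)
    have hcpos : 0 < ‖y x + t • w x‖ := lt_of_lt_of_le (by linarith) hcl
    rw [hF', Real.norm_eq_abs, abs_div, abs_of_nonneg (sq_nonneg ‖y x + t • w x‖)]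
    have h1 : |⟪y x + t • w x, w x⟫| ≤ ‖y x + t • w x‖ * ‖w x‖ :=
      abs_real_inner_le_norm _ _
    rw [div_le_iff₀ (by positivity)]
    calc |⟪y x + t • w x, w x⟫| ≤ ‖y x + t • w x‖ * ‖w x‖ := h1
      _ ≤ ‖y x + t • w x‖ * ‖y x‖ :=
          mul_le_mul_of_nonneg_left (hwy x) (norm_nonneg _)
      _ ≤ ‖y x + t • w x‖ * (2 * ‖y x + t • w x‖) := by
          apply mul_le_mul_of_nonneg_left _ (norm_nonneg _)
          linarith
      _ = 2 * ‖y x + t • w x‖^2 := by ring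
  -- measurability
  have hF'_meas : AEStronglyMeasurable (F' 0) μ := by
    apply Measurable.aestronglyMeasurable
    have hyc : Continuous y := (matCLM A₀).continuous
    have hwc : Continuous w := by
      exact Continuous.smul (f := fun x => ⟪y x, θ⟫) (g := fun _ => θ)
        (hyc.inner continuous_const) continuous_const
    have h1 : Continuous fun x => ⟪y x + (0:ℝ) • w x, w x⟫ :=
      Continuous.inner (hyc.add (hwc.const_smul (0:ℝ))) hwc
    have h2 : Continuous fun x => ‖y x + (0:ℝ) • w x‖^2 :=
      ((hyc.add (hwc.const_smul (0:ℝ))).norm).pow 2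
    exact h1.measurable.div h2.measurable
  have hF_meas : ∀ᶠ t in nhds (0:ℝ), AEStronglyMeasurable (F t) μ :=
    Filter.Eventually.of_forall (fun t => aesm_log μ _)
  have hF_int : Integrable (F 0) μ := by
    have := ff_integrable hn μ hsph A₀ hA₀unit
    rw [hF]
    simpa [hB0] using this
  obtain ⟨hint', hderiv⟩ := hasDerivAt_integral_of_dominated_loc_of_deriv_le
    (Metric.ball_mem_nhds (0:ℝ) (by norm_num : (0:ℝ) < 1/2)) hF_meas hF_int hF'_meas h_bound
    (integrable_const 2) h_diff
  -- phi and local min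
  set φ : ℝ → ℝ := fun t => (∫ x, F t x ∂μ) - (1/(n:ℝ)) * Real.log (1+t) with hφ
  have hlog1 : HasDerivAt (fun t : ℝ => Real.log (1+t)) 1 0 := by
    have h1 : HasDerivAt (fun t : ℝ => 1 + t) 1 0 := by
      simpa using (hasDerivAt_id (0:ℝ)).const_add 1
    have h2 := h1.log (by norm_num)
    simpa using h2
  have hφderiv : HasDerivAt φ ((∫ x, F' 0 x ∂μ) - (1/(n:ℝ)) * 1) 0 :=
    hderiv.sub ((hlog1.const_mul (1/(n:ℝ))))
  have hlocmin : IsLocalMin φ 0 := by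
    have hmem : Set.Ioo (-(1:ℝ)/2) (1/2) ∈ nhds (0:ℝ) :=
      isOpen_Ioo.mem_nhds (by norm_num)
    apply Filter.eventually_of_mem hmem
    intro t ht
    have h1 := phi_lower hn μ hsph A₀ hdet0 hmin θ hθ ht
    have hφ0 : φ 0 = ff μ A₀ := by
      rw [hφ]
      simp only [hF]
      rw [ff]
      simp [hB0]
    rw [hφ0]
    rw [hφ]
    exact h1
  have hzero := hlocmin.hasDerivAt_eq_zero hφderiv
  have hint : ∫ x, F' 0 x ∂μ = 1/(n:ℝ) := by
    have := hzero
    linarith [this]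
  rw [← hint]
  apply integral_congr_ae
  apply Filter.Eventually.of_forall
  intro x
  rw [hF']
  simp only [zero_smul, add_zero]
  rw [hw, real_inner_smul_right]
  ring_nf
  rfl


/-- For a probability measure `μ` on `S^{n−1}` giving zero mass to every hyperplane
through the origin, there is an invertible linear map `T` such that the pushforward of
`μ` under `x ↦ Tx/|Tx|` is isotropic: `∫ (R(Tx)·θ)² dμ(x) = 1/n` for all unit `θ`. -/
theorem stmt10 {n : ℕ} (hn : 1 ≤ n)
    (μ : Measure (EuclideanSpace ℝ (Fin n))) [IsProbabilityMeasure μ]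
    (hsph : μ (Metric.sphere (0 : EuclideanSpace ℝ (Fin n)) 1) = 1)
    (hhyp : ∀ θ : EuclideanSpace ℝ (Fin n), θ ≠ 0 → μ {x | ⟪x, θ⟫ = 0} = 0) :
    ∃ T : EuclideanSpace ℝ (Fin n) ≃ₗ[ℝ] EuclideanSpace ℝ (Fin n),
      ∀ θ : EuclideanSpace ℝ (Fin n), ‖θ‖ = 1 →
        ∫ x, ⟪‖T x‖⁻¹ • T x, θ⟫ ^ 2 ∂μ = 1 / n := by
  obtain ⟨A₀, hdet0, hmin⟩ := exists_global_min hn μ hsph hhyp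
  have hA₀unit : IsUnit A₀.det := by rw [hdet0]; exact isUnit_one
  have hleft : ∀ x : EuclideanSpace ℝ (Fin n), matCLM A₀⁻¹ (matCLM A₀ x) = x := by
    intro x
    have h2 : matCLM A₀⁻¹ (matCLM A₀ x) = matCLM (A₀⁻¹ * A₀) x := by
      rw [matCLM, matCLM, matCLM, _root_.map_mul]; rfl
    rw [h2, Matrix.nonsing_inv_mul A₀ hA₀unit]
    simp [matCLM]
  have hright : ∀ z : EuclideanSpace ℝ (Fin n), matCLM A₀ (matCLM A₀⁻¹ z) = z := by
    intro z
    have h2 : matCLM A₀ (matCLM A₀⁻¹ z) = matCLM (A₀ * A₀⁻¹) z := by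
      rw [matCLM, matCLM, matCLM, _root_.map_mul]; rfl
    rw [h2, Matrix.mul_nonsing_inv A₀ hA₀unit]
    simp [matCLM]
  refine ⟨LinearEquiv.ofLinear (matCLM A₀ : EuclideanSpace ℝ (Fin n) →ₗ[ℝ] EuclideanSpace ℝ (Fin n))
    (matCLM A₀⁻¹ : EuclideanSpace ℝ (Fin n) →ₗ[ℝ] EuclideanSpace ℝ (Fin n))
    (LinearMap.ext fun z => hright z) (LinearMap.ext fun x => hleft x), fun θ hθ => ?_⟩
  have h1 := first_order hn μ hsph A₀ hdet0 hmin θ hθ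
  have h2 : ∀ x : EuclideanSpace ℝ (Fin n),
      ⟪‖matCLM A₀ x‖⁻¹ • matCLM A₀ x, θ⟫ ^ 2
        = ⟪matCLM A₀ x, θ⟫ ^ 2 / ‖matCLM A₀ x‖ ^ 2 := by
    intro x
    rw [real_inner_smul_left]
    rw [mul_pow]
    field_simp
  calc ∫ x, ⟪‖matCLM A₀ x‖⁻¹ • matCLM A₀ x, θ⟫ ^ 2 ∂μ
      = ∫ x, ⟪matCLM A₀ x, θ⟫ ^ 2 / ‖matCLM A₀ x‖ ^ 2 ∂μ := by
        apply integral_congr_ae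
        exact Filter.Eventually.of_forall h2
    _ = 1 / (n:ℝ) := h1
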